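/- Let $\mathcal{L}$ be a distraction matrix. For every degree $d$, the $K$-linear map $D_{\mathcal{L}}: P_d \to P_d$ is a bijection (an automorphism of the $K$-vector space $P_d$). Consequently, $\dim_K V = \dim_K D_{\mathcal{L}}(V)$ for every subspace $V \subseteq P_d$. -/

import Mathlib

open MvPolynomial

noncomputable section
/-- A distraction matrix: a family of linear forms `L i j` (`1 ≤ i ≤ n`, `j ∈ ℕ`) such that
every selection `L 1 j₁, …, L n jₙ` spans the space of linear forms, and every row is
eventually constant. -/
def IsDistractionMatrix (n : ℕ) (K : Type*) [Field K]
    (L : Fin n → ℕ → MvPolynomial (Fin n) K) : Prop :=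
  (∀ i j, (L i j).IsHomogeneous 1) ∧
  (∀ js : Fin n → ℕ, ∀ k : Fin n,
      (X k : MvPolynomial (Fin n) K) ∈
        Submodule.span K (Set.range fun i => L i (js i))) ∧
  (∃ N : ℕ, ∀ i : Fin n, ∀ j : ℕ, N < j → L i j = L i N)

/-- The distraction of the monomial `x^d`: `∏ i ∏_{j=1}^{d i} L i j`. -/
def distrMon (n : ℕ) (K : Type*) [Field K]
    (L : Fin n → ℕ → MvPolynomial (Fin n) K) (d : Fin n →₀ ℕ) :
    MvPolynomial (Fin n) K :=
  ∏ i, ∏ j ∈ Finset.range (d i), L i (j + 1)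

/-- The distraction operator `D_L`, extended `K`-linearly from monomials to all of `P`. -/
def distr (n : ℕ) (K : Type*) [Field K]
    (L : Fin n → ℕ → MvPolynomial (Fin n) K) (f : MvPolynomial (Fin n) K) :
    MvPolynomial (Fin n) K :=
  ∑ d ∈ f.support, coeff d f • distrMon n K L d

section Aux
variable (n : ℕ) (K : Type*) [Field K] (L : Fin n → ℕ → MvPolynomial (Fin n) K)

lemma distr_eq_lc (f : MvPolynomial (Fin n) K) :
    distr n K L f = Finsupp.linearCombination K (distrMon n K L) (AddMonoidAlgebra.coeffLinearEquiv K f) := rfl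

/-- The distraction operator as a linear map. -/
def distrLM : MvPolynomial (Fin n) K →ₗ[K] MvPolynomial (Fin n) K where
  toFun := distr n K L
  map_add' f g := by rw [distr_eq_lc, distr_eq_lc, distr_eq_lc, map_add, map_add]
  map_smul' c f := by
    show distr n K L (c • f) = c • distr n K L f
    rw [distr_eq_lc, distr_eq_lc, map_smul, map_smul]

lemma distr_monomial (d : Fin n →₀ ℕ) :
    distr n K L (monomial d (1 : K)) = distrMon n K L d := by
  rw [distr_eq_lc]
  have : AddMonoidAlgebra.coeffLinearEquiv K (monomial d (1 : K)) = Finsupp.single d (1 : K) := rfl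
  rw [this, Finsupp.linearCombination_single, one_smul]

end Aux

/-- A monomial vector subspace: a subspace spanned by monomials. -/
def IsMonomialSubspace (n : ℕ) (K : Type*) [Field K]
    (V : Submodule K (MvPolynomial (Fin n) K)) : Prop :=
  ∃ S : Set (Fin n →₀ ℕ), V = Submodule.span K ((fun d => monomial d (1 : K)) '' S)

/-- The image `D_L(V)` of a subspace under the distraction operator (as a subspace). -/
def distrSub (n : ℕ) (K : Type*) [Field K]
    (L : Fin n → ℕ → MvPolynomial (Fin n) K)
    (V : Submodule K (MvPolynomial (Fin n) K)) :
    Submodule K (MvPolynomial (Fin n) K) :=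
  Submodule.span K (distr n K L '' V)

/-- The product `V·W` of two subspaces of the polynomial ring. -/
def mulSub (n : ℕ) (K : Type*) [Field K]
    (V W : Submodule K (MvPolynomial (Fin n) K)) :
    Submodule K (MvPolynomial (Fin n) K) :=
  Submodule.span K {p | ∃ v ∈ V, ∃ w ∈ W, p = v * w}


section Aux2
variable (n : ℕ) (K : Type*) [Field K] (L : Fin n → ℕ → MvPolynomial (Fin n) K)

lemma degree_eq_sum_univ (d : Fin n →₀ ℕ) : d.degree = ∑ i, d i := by
  rw [Finsupp.degree]
  exact Finset.sum_subset (Finset.subset_univ _)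
    (fun x _ hx => Finsupp.notMem_support_iff.mp hx)

lemma fin_degree_add (a b : Fin n →₀ ℕ) : (a + b).degree = a.degree + b.degree := by
  rw [degree_eq_sum_univ, degree_eq_sum_univ, degree_eq_sum_univ, ← Finset.sum_add_distrib]
  rfl

lemma fin_degree_single (k : Fin n) (m : ℕ) : (Finsupp.single k m).degree = m := by
  rw [degree_eq_sum_univ]
  simp [Finsupp.single_apply]

lemma distrMon_isHomogeneous (hL1 : ∀ i j, (L i j).IsHomogeneous 1) (d : Fin n →₀ ℕ) :
    (distrMon n K L d).IsHomogeneous d.degree := by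
  rw [degree_eq_sum_univ]
  apply MvPolynomial.IsHomogeneous.prod _ _ (fun i => d i)
  intro i _
  have := MvPolynomial.IsHomogeneous.prod (Finset.range (d i)) (fun j => L i (j + 1))
    (fun _ => 1) (fun j _ => hL1 i (j + 1))
  simpa using this

lemma distrMon_add_single (t : Fin n →₀ ℕ) (i : Fin n) :
    distrMon n K L (t + Finsupp.single i 1) = L i (t i + 1) * distrMon n K L t := by
  unfold distrMon
  rw [← Finset.prod_erase_mul _ _ (Finset.mem_univ i),
      ← Finset.prod_erase_mul _ _ (Finset.mem_univ i)]
  have h1 : ∀ i' ∈ Finset.univ.erase i,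
      ∏ j ∈ Finset.range ((t + Finsupp.single i 1 : Fin n →₀ ℕ) i'), L i' (j + 1)
        = ∏ j ∈ Finset.range (t i'), L i' (j + 1) := by
    intro i' hi'
    have hne : i ≠ i' := Ne.symm (Finset.mem_erase.mp hi').1
    rw [Finsupp.add_apply, Finsupp.single_apply, if_neg hne, add_zero]
  rw [Finset.prod_congr rfl h1]
  have h2 : (t + Finsupp.single i 1 : Fin n →₀ ℕ) i = t i + 1 := by simp
  rw [h2, Finset.prod_range_succ]
  ring

lemma distr_mem_homog (hL1 : ∀ i j, (L i j).IsHomogeneous 1) (e : ℕ)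
    {f : MvPolynomial (Fin n) K} (hf : f ∈ homogeneousSubmodule (Fin n) K e) :
    distr n K L f ∈ homogeneousSubmodule (Fin n) K e := by
  rw [distr]
  apply Submodule.sum_mem
  intro d hd
  apply Submodule.smul_mem
  rw [mem_homogeneousSubmodule]
  have hdeg : d.degree = e := by
    rw [Finsupp.degree_eq_weight_one]
    exact hf (MvPolynomial.mem_support_iff.mp hd)
  exact hdeg ▸ distrMon_isHomogeneous n K L hL1 d

lemma monomial_mem_span
    (hL2 : ∀ js : Fin n → ℕ, ∀ k : Fin n,
      (X k : MvPolynomial (Fin n) K) ∈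
        Submodule.span K (Set.range fun i => L i (js i))) :
    ∀ e : ℕ, ∀ d : Fin n →₀ ℕ, d.degree = e →
      monomial d (1 : K) ∈
        Submodule.span K (distrMon n K L '' {t | t.degree = e}) := by
  intro e
  induction e with
  | zero =>
    intro d hd
    have hd0 : d = 0 := (Finsupp.degree_eq_zero_iff d).mp hd
    subst hd0
    apply Submodule.subset_span
    refine ⟨0, by simp, ?_⟩
    simp [distrMon]
  | succ e ih =>
    intro d hd
    obtain ⟨k, hk⟩ : ∃ k, d k ≠ 0 := by
      by_contra h
      push_neg at h
      have hz : d = 0 := DFunLike.ext _ _ h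
      rw [hz] at hd
      simp at hd
    set d' := d - Finsupp.single k 1 with hd'def
    have hle : Finsupp.single k 1 ≤ d :=
      Finsupp.single_le_iff.mpr (Nat.one_le_iff_ne_zero.mpr hk)
    have hsum : d' + Finsupp.single k 1 = d := tsub_add_cancel_of_le hle
    have hdeg' : d'.degree = e := by
      have h1 : (d' + Finsupp.single k 1).degree = e + 1 := by rw [hsum]; exact hd
      rw [fin_degree_add, fin_degree_single] at h1
      omega
    have key : ∀ t : Fin n →₀ ℕ, t.degree = e →
        distrMon n K L t * X k ∈
          Submodule.span K (distrMon n K L '' {t | t.degree = e + 1}) := by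
      intro t ht
      have hXk := hL2 (fun i => t i + 1) k
      have hmem := Submodule.mem_map_of_mem
        (f := LinearMap.mulLeft K (distrMon n K L t)) hXk
      rw [Submodule.map_span] at hmem
      have hmem' : distrMon n K L t * X k ∈ Submodule.span K
          ((LinearMap.mulLeft K (distrMon n K L t)) ''
            Set.range fun i => L i (t i + 1)) := hmem
      refine Submodule.span_le.mpr ?_ hmem'
      rintro _ ⟨_, ⟨i, rfl⟩, rfl⟩
      apply Submodule.subset_span
      refine ⟨t + Finsupp.single i 1, ?_, ?_⟩
      · simp [Set.mem_setOf_eq, fin_degree_add, fin_degree_single, ht]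
      · rw [distrMon_add_single, LinearMap.mulLeft_apply, mul_comm]
    have hmon : monomial d (1 : K) = monomial d' (1 : K) * X k := by
      have hX : (X k : MvPolynomial (Fin n) K) = monomial (Finsupp.single k 1) 1 := rfl
      rw [hX, monomial_mul, mul_one, hsum]
    have h1 := ih d' hdeg'
    have h2 := Submodule.mem_map_of_mem
      (f := LinearMap.mulRight K (X k : MvPolynomial (Fin n) K)) h1
    rw [Submodule.map_span] at h2
    have h3 : (LinearMap.mulRight K (X k : MvPolynomial (Fin n) K)) ''
        (distrMon n K L '' {t | t.degree = e}) ⊆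
        (Submodule.span K (distrMon n K L '' {t | t.degree = e + 1}) : Set _) := by
      rintro _ ⟨_, ⟨t, ht, rfl⟩, rfl⟩
      simpa [LinearMap.mulRight_apply] using key t ht
    have h4 := Submodule.span_le.mpr h3 h2
    rw [hmon]
    simpa [LinearMap.mulRight_apply] using h4

lemma map_distr_homog (hL : IsDistractionMatrix n K L) (e : ℕ) :
    Submodule.map (distrLM n K L) (homogeneousSubmodule (Fin n) K e)
      = homogeneousSubmodule (Fin n) K e := by
  obtain ⟨hL1, hL2, -⟩ := hL
  apply le_antisymm
  · rintro _ ⟨f, hf, rfl⟩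
    exact distr_mem_homog n K L hL1 e hf
  · calc homogeneousSubmodule (Fin n) K e
        ≤ Submodule.span K (distrMon n K L '' {t | t.degree = e}) := by
          rw [homogeneousSubmodule_eq_finsupp_supported,
            AddMonoidAlgebra.supported_eq_span_single]
          apply Submodule.span_le.mpr
          rintro _ ⟨d, hd, rfl⟩
          exact monomial_mem_span n K L hL2 e d hd
      _ ≤ Submodule.map (distrLM n K L) (homogeneousSubmodule (Fin n) K e) := by
          apply Submodule.span_le.mpr
          rintro _ ⟨t, ht, rfl⟩
          exact ⟨monomial t 1,
            (mem_homogeneousSubmodule _ _).mpr (isHomogeneous_monomial 1 ht),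
            distr_monomial n K L t⟩

instance homog_fd (e : ℕ) : FiniteDimensional K (homogeneousSubmodule (Fin n) K e) := by
  apply Submodule.finiteDimensional_of_le (S₂ := restrictTotalDegree (Fin n) K e)
  intro p hp
  rw [mem_restrictTotalDegree]
  exact ((mem_homogeneousSubmodule _ _).mp hp).totalDegree_le

end Aux2

/-- `D_L` restricts to a bijection of `P_d` for every `d`, and consequently
preserves the dimension of every subspace `V ⊆ P_d`. -/
theorem distr_bijOn_homogeneous (n : ℕ) (K : Type*) [Field K] [Infinite K]
    (L : Fin n → ℕ → MvPolynomial (Fin n) K) (hL : IsDistractionMatrix n K L) :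
    (∀ d : ℕ,
      Set.BijOn (distr n K L) (homogeneousSubmodule (Fin n) K d)
        (homogeneousSubmodule (Fin n) K d)) ∧
    (∀ d : ℕ, ∀ V : Submodule K (MvPolynomial (Fin n) K),
      V ≤ homogeneousSubmodule (Fin n) K d →
        Module.rank K V = Module.rank K (distrSub n K L V)) := by
  have hL1 := hL.1
  have hmapsTo : ∀ e : ℕ, Set.MapsTo (distr n K L)
      (homogeneousSubmodule (Fin n) K e) (homogeneousSubmodule (Fin n) K e) :=
    fun e f hf => distr_mem_homog n K L hL1 e hf
  have hmapeq := map_distr_homog n K L hL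
  have hinj : ∀ e : ℕ, Set.InjOn (distr n K L) (homogeneousSubmodule (Fin n) K e) := by
    intro e
    have hrestr : ∀ x ∈ homogeneousSubmodule (Fin n) K e,
        distrLM n K L x ∈ homogeneousSubmodule (Fin n) K e :=
      fun x hx => distr_mem_homog n K L hL1 e hx
    set g := (distrLM n K L).restrict hrestr with hg
    have hsurj : Function.Surjective g := by
      rintro ⟨y, hy⟩
      rw [← hmapeq e] at hy
      obtain ⟨x, hx, hxy⟩ := hy
      exact ⟨⟨x, hx⟩, Subtype.ext hxy⟩
    have hginj := LinearMap.injective_iff_surjective.mpr hsurj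
    intro x hx y hy hxy
    have h := hginj (a₁ := ⟨x, hx⟩) (a₂ := ⟨y, hy⟩) (Subtype.ext hxy)
    exact congrArg Subtype.val h
  constructor
  · intro e
    refine ⟨hmapsTo e, hinj e, ?_⟩
    intro y hy
    rw [← hmapeq e] at hy
    obtain ⟨x, hx, hxy⟩ := hy
    exact ⟨x, hx, hxy⟩
  · intro e V hV
    have hVim : distrSub n K L V = Submodule.map (distrLM n K L) V := by
      rw [distrSub, show distr n K L '' ↑V = ⇑(distrLM n K L) '' ↑V from rfl,
        ← Submodule.map_coe, Submodule.span_eq]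
    set g := (distrLM n K L).domRestrict V with hg
    have hginj : Function.Injective g := by
      rintro ⟨x, hx⟩ ⟨y, hy⟩ hxy
      exact Subtype.ext (hinj e (hV hx) (hV hy) hxy)
    have hrank := LinearEquiv.rank_eq (LinearEquiv.ofInjective g hginj)
    rw [hVim, ← LinearMap.range_domRestrict]
    exact hrank
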